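/- arXiv:2208.04793 — 4 statements merged into one kernel-verified Lean document; each statement's English description precedes it below -/
import Mathlib

section
/- Let E be a finite set, and for each e ∈ E let p(·,e) : ℝ≥0 → [0,1] be continuously differentiable. Let P_β be the product Bernoulli measure on {0,1}^E where coordinate e has success probability p(β,e), and let f : {0,1}^E → ℝ. Then the map β ↦ E_β[f] is differentiable, and its derivative equals Σ_{e∈E} p'(β,e) · E_β[f(ω^{e+}) − f(ω^{e−})], where ω^{e+} (resp. ω^{e−}) denotes ω with coordinate e set to 1 (resp. 0). -/
/-- Russo's formula for expectations: for a product Bernoulli measure on `{0,1}^E`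
with continuously differentiable inclusion probabilities `p(·, e)`, the expectation
of any `f : {0,1}^E → ℝ` is differentiable in `β`, with derivative
`∑_e p'(β,e) · E_β[f(ω^{e+}) − f(ω^{e−})]`. -/
theorem stmt_0 {E : Type*} [Fintype E] [DecidableEq E]
    (p p' : ℝ → E → ℝ)
    (hp01 : ∀ β e, 0 ≤ p β e ∧ p β e ≤ 1)
    (hderiv : ∀ e β, HasDerivAt (fun b => p b e) (p' β e) β)
    (hcont : ∀ e, Continuous fun b => p' b e)
    (f : (E → Bool) → ℝ) (β : ℝ) :
    HasDerivAt
      (fun b => ∑ ω : E → Bool,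
        f ω * ∏ e : E, (if ω e then p b e else 1 - p b e))
      (∑ e : E, p' β e *
        ∑ ω : E → Bool,
          (f (Function.update ω e true) - f (Function.update ω e false)) *
            ∏ e' : E, (if ω e' then p β e' else 1 - p β e'))
      β := by
  classical
  -- abbreviation for the product over the erased set
  set P : E → (E → Bool) → ℝ :=
    fun e ω => ∏ e' ∈ Finset.univ.erase e, (if ω e' then p β e' else 1 - p β e') with hPdef
  -- Step 1: the derivative exists, with the "product rule" value
  have hD : HasDerivAt
      (fun b => ∑ ω : E → Bool, f ω * ∏ e : E, (if ω e then p b e else 1 - p b e))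
      (∑ ω : E → Bool, f ω *
        ∑ e : E, P e ω * (if ω e then p' β e else -(p' β e))) β := by
    apply HasDerivAt.fun_sum
    intro ω _
    have hprod : HasDerivAt
        (fun b => ∏ e : E, (if ω e then p b e else 1 - p b e))
        (∑ e : E, P e ω * (if ω e then p' β e else -(p' β e))) β := by
      have := HasDerivAt.fun_finset_prod (u := Finset.univ)
        (f := fun e b => if ω e then p b e else 1 - p b e)
        (f' := fun e => if ω e then p' β e else -(p' β e)) (x := β) ?_
      · simpa [smul_eq_mul, hPdef] using this
      · intro e _
        by_cases h : ω e
        · simpa [h] using hderiv e β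
        · simpa [h] using (hderiv e β).const_sub 1
    simpa using hprod.const_mul (f ω)
  -- Step 2: the key combinatorial identity for each edge
  have key : ∀ e : E,
      (∑ ω : E → Bool, f ω * (P e ω * (if ω e then p' β e else -(p' β e))))
      = p' β e * ∑ ω : E → Bool,
          (f (Function.update ω e true) - f (Function.update ω e false)) *
            ∏ e' : E, (if ω e' then p β e' else 1 - p β e') := by
    intro e
    rw [Finset.mul_sum, ← sub_eq_zero, ← Finset.sum_sub_distrib]
    refine Finset.sum_ninvolution (fun ω => Function.update ω e (!ω e)) ?_ ?_
      (fun _ => Finset.mem_univ _) ?_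
    · intro ω
      -- invariance facts
      have hP : ∀ b : Bool, P e (Function.update ω e b) = P e ω := by
        intro b
        refine Finset.prod_congr rfl fun e' he' => ?_
        rw [Function.update_of_ne (Finset.ne_of_mem_erase he')]
      have hW : ∀ σ : E → Bool,
          (∏ e' : E, (if σ e' then p β e' else 1 - p β e'))
            = (if σ e then p β e else 1 - p β e) * P e σ := by
        intro σ
        exact (Finset.mul_prod_erase Finset.univ _ (Finset.mem_univ e)).symm
      have hupd : ∀ b b' : Bool,
          Function.update (Function.update ω e b) e b' = Function.update ω e b' := by
        intro b b'; simp [Function.update_idem]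
      cases hωe : ω e with
      | true =>
        have hω : Function.update ω e true = ω := by
          rw [← hωe]; exact Function.update_eq_self e ω
        simp only [hW, hP, hupd, Function.update_self, hωe, hω, Bool.not_true, Bool.false_eq_true,
          if_true, if_false]
        ring
      | false =>
        have hω : Function.update ω e false = ω := by
          rw [← hωe]; exact Function.update_eq_self e ω
        simp only [hW, hP, hupd, Function.update_self, hωe, hω, Bool.not_false, Bool.false_eq_true,
          if_true, if_false]
        ring
    · intro ω _ h
      have := congrFun h e
      simp at this
    · intro ω
      simp [Function.update_idem]
  -- Step 3: rewrite the target derivative into the product-rule form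
  have hEq : (∑ e : E, p' β e *
        ∑ ω : E → Bool,
          (f (Function.update ω e true) - f (Function.update ω e false)) *
            ∏ e' : E, (if ω e' then p β e' else 1 - p β e'))
      = ∑ ω : E → Bool, f ω *
        ∑ e : E, P e ω * (if ω e then p' β e else -(p' β e)) := by
    rw [← Finset.sum_congr rfl fun e _ => key e, Finset.sum_comm]
    exact Finset.sum_congr rfl fun ω _ => (Finset.mul_sum _ _ _).symm
  rw [hEq]
  exact hD
end

section
/- In one-dimensional long-range percolation on {0,…,n−1} where for u < v the edge {u,v} is open independently with probability 1 − exp(−β ∫_u^{u+1}∫_v^{v+1}|x−y|^{−2}dxdy) (probability 1 for |u−v|=1), the expected graph distance between 0 and n−1 is at least (n−2)·n^{−β}. -/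
open MeasureTheory intervalIntegral


open MeasureTheory intervalIntegral Finset

set_option maxHeartbeats 1000000

-- generic Bernoulli factorization
lemma bern_sum {E : Type*} [Fintype E] [DecidableEq E] (p : E → Bool → ℝ) :
    ∑ ω : E → Bool, ∏ e, p e (ω e) = ∏ e, (p e true + p e false) := by
  rw [show (fun e => p e true + p e false) = fun e => ∑ b : Bool, p e b by
    funext e; simp [Fintype.sum_bool]]
  rw [Fintype.prod_sum]

lemma bern_event {E : Type*} [Fintype E] [DecidableEq E] (p : E → Bool → ℝ) (S : Finset E)
    (hsum : ∀ e, p e true + p e false = 1) :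
    ∑ ω : E → Bool, (if ∀ e ∈ S, ω e = false then (1:ℝ) else 0) * ∏ e, p e (ω e)
      = ∏ e ∈ S, p e false := by
  have key : ∀ ω : E → Bool,
      (if ∀ e ∈ S, ω e = false then (1:ℝ) else 0) * ∏ e, p e (ω e)
        = ∏ e, (if e ∈ S ∧ ω e = true then 0 else p e (ω e)) := by
    intro ω
    by_cases h : ∀ e ∈ S, ω e = false
    · rw [if_pos h, one_mul]
      refine Finset.prod_congr rfl fun e _ => ?_
      rw [if_neg]
      rintro ⟨he, ht⟩
      simp [h e he] at ht
    · rw [if_neg h, zero_mul]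
      push_neg at h
      obtain ⟨e, he, hne⟩ := h
      rw [eq_comm]
      refine Finset.prod_eq_zero (Finset.mem_univ e) ?_
      rw [if_pos ⟨he, by simpa using hne⟩]
  rw [Finset.sum_congr rfl fun ω _ => key ω]
  rw [bern_sum (fun e b => if e ∈ S ∧ b = true then 0 else p e b)]
  have : ∀ e : E, ((if e ∈ S ∧ true = true then (0:ℝ) else p e true) +
      (if e ∈ S ∧ false = true then 0 else p e false)) = if e ∈ S then p e false else 1 := by
    intro e
    by_cases he : e ∈ S <;> simp [he, hsum e]
  rw [Finset.prod_congr rfl fun e _ => this e, Fintype.prod_ite_mem]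


lemma inner_int (x v : ℝ) (hx : x < v) :
    ∫ y in v..(v+1), 1/(x-y)^2 = 1/(x-(v+1)) - 1/(x-v) := by
  have h : ∀ y ∈ Set.uIcc v (v+1), HasDerivAt (fun y => (x - y)⁻¹) (1/(x-y)^2) y := by
    intro y hy
    rw [Set.uIcc_of_le (by linarith)] at hy
    obtain ⟨hy1, hy2⟩ := hy
    have hne : x - y ≠ 0 := by intro h; linarith
    have h1 : HasDerivAt (fun y : ℝ => x - y) (-1) y := (hasDerivAt_id y).const_sub x
    exact (h1.inv hne).congr_deriv (by ring)
  have hc : ContinuousOn (fun y => 1/(x-y)^2) (Set.uIcc v (v+1)) := by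
    apply ContinuousOn.div continuousOn_const (by fun_prop)
    intro y hy
    rw [Set.uIcc_of_le (by linarith)] at hy
    obtain ⟨hy1, hy2⟩ := hy
    have hne : x - y ≠ 0 := by intro h; linarith
    exact pow_ne_zero 2 hne
  rw [integral_eq_sub_of_hasDerivAt h (hc.intervalIntegrable)]
  simp [one_div]

lemma outer_int (u v : ℝ) (huv : u + 1 < v) :
    (∫ x in u..(u+1), (1/(x-(v+1)) - 1/(x-v)))
      = (Real.log (v - u) - Real.log (v - u - 1)) - (Real.log (v + 1 - u) - Real.log (v + 1 - u - 1)) := by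
  have h : ∀ x ∈ Set.uIcc u (u+1),
      HasDerivAt (fun x => Real.log (x-(v+1)) - Real.log (x-v)) (1/(x-(v+1)) - 1/(x-v)) x := by
    intro x hx
    rw [Set.uIcc_of_le (by linarith)] at hx
    obtain ⟨hx1, hx2⟩ := hx
    have h1 : x - (v+1) ≠ 0 := by intro h; linarith
    have h2 : x - v ≠ 0 := by intro h; linarith
    have d1 : HasDerivAt (fun x : ℝ => x - (v+1)) 1 x := (hasDerivAt_id x).sub_const _
    have d2 : HasDerivAt (fun x : ℝ => x - v) 1 x := (hasDerivAt_id x).sub_const _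
    exact (d1.log h1).sub (d2.log h2)
  have hc : ContinuousOn (fun x => 1/(x-(v+1)) - 1/(x-v)) (Set.uIcc u (u+1)) := by
    apply ContinuousOn.sub
    · apply ContinuousOn.div continuousOn_const (by fun_prop)
      intro x hx
      rw [Set.uIcc_of_le (by linarith)] at hx
      obtain ⟨hx1, hx2⟩ := hx
      intro h; linarith
    · apply ContinuousOn.div continuousOn_const (by fun_prop)
      intro x hx
      rw [Set.uIcc_of_le (by linarith)] at hx
      obtain ⟨hx1, hx2⟩ := hx
      intro h; linarith
  rw [integral_eq_sub_of_hasDerivAt h (hc.intervalIntegrable)]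
  have e1 : u + 1 - (v+1) = -(v - u) := by ring
  have e2 : u + 1 - v = -(v - u - 1) := by ring
  have e3 : u - (v+1) = -(v + 1 - u) := by ring
  have e4 : u - v = -(v + 1 - u - 1) := by ring
  rw [e1, e2, e3, e4, Real.log_neg_eq_log, Real.log_neg_eq_log, Real.log_neg_eq_log, Real.log_neg_eq_log]

lemma Iuv_eq (u v : ℝ) (huv : u + 1 < v) :
    (∫ x in u..(u+1), ∫ y in v..(v+1), 1/(x-y)^2)
      = (Real.log (v - u) - Real.log (v - u - 1)) - (Real.log (v + 1 - u) - Real.log (v + 1 - u - 1)) := by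
  rw [← outer_int u v huv]
  apply intervalIntegral.integral_congr
  intro x hx
  rw [Set.uIcc_of_le (by linarith)] at hx
  exact inner_int x v (by linarith [hx.2])


abbrev Ed (n : ℕ) := {p : Fin n × Fin n // p.1 < p.2}

noncomputable def Iuv (u v : ℕ) : ℝ :=
  ∫ x in ((u : ℕ) : ℝ)..(((u : ℕ) : ℝ) + 1), ∫ y in ((v : ℕ) : ℝ)..(((v : ℕ) : ℝ) + 1), 1 / (x - y) ^ 2

lemma Iuv_nonneg (u v : ℕ) : 0 ≤ Iuv u v := by
  apply intervalIntegral.integral_nonneg (by linarith)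
  intro x _
  apply intervalIntegral.integral_nonneg (by linarith)
  intro y _
  positivity

def Sw (n : ℕ) (w : ℕ) : Finset (Ed n) :=
  Finset.univ.filter (fun e : Ed n => (e.1.1 : ℕ) < w ∧ w < (e.1.2 : ℕ))

lemma sum_Sw {n : ℕ} (hn : 2 ≤ n) (w : ℕ) (hw2 : w ≤ n - 2) (f : ℕ → ℕ → ℝ) :
    ∑ e ∈ Sw n w, f (e.1.1 : ℕ) (e.1.2 : ℕ)
      = ∑ u ∈ Finset.range w, ∑ v ∈ Finset.Ico (w+1) n, f u v := by
  rw [← Finset.sum_product']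
  refine Finset.sum_nbij' (fun e => ((e.1.1 : ℕ), (e.1.2 : ℕ)))
    (fun p => if h : (⟨p.1 % n, Nat.mod_lt _ (by omega)⟩ : Fin n) < ⟨p.2 % n, Nat.mod_lt _ (by omega)⟩
      then ⟨((⟨p.1 % n, Nat.mod_lt _ (by omega)⟩ : Fin n), ⟨p.2 % n, Nat.mod_lt _ (by omega)⟩), h⟩
      else ⟨((⟨0, by omega⟩ : Fin n), ⟨1, by omega⟩), Fin.mk_lt_mk.mpr (by omega)⟩)
    ?_ ?_ ?_ ?_ ?_
  · intro e he
    simp only [Sw, Finset.mem_filter, Finset.mem_univ, true_and] at he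
    simp only [Finset.mem_product, Finset.mem_range, Finset.mem_Ico]
    exact ⟨he.1, he.2, e.1.2.isLt⟩
  · intro p hp
    simp only [Finset.mem_product, Finset.mem_range, Finset.mem_Ico] at hp
    have h1 : p.1 % n = p.1 := Nat.mod_eq_of_lt (by omega)
    have h2 : p.2 % n = p.2 := Nat.mod_eq_of_lt (by omega)
    rw [dif_pos (by rw [Fin.mk_lt_mk, h1, h2]; omega)]
    simp only [Sw, Finset.mem_filter, Finset.mem_univ, true_and]
    constructor
    · simp only [h1]; omega
    · simp only [h2]; omega
  · intro e he
    simp only [Sw, Finset.mem_filter, Finset.mem_univ, true_and] at he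
    have h1 : (e.1.1 : ℕ) % n = (e.1.1 : ℕ) := Nat.mod_eq_of_lt e.1.1.isLt
    have h2 : (e.1.2 : ℕ) % n = (e.1.2 : ℕ) := Nat.mod_eq_of_lt e.1.2.isLt
    dsimp only
    rw [dif_pos (by rw [Fin.mk_lt_mk, h1, h2]; exact e.2)]
    apply Subtype.ext
    apply Prod.ext <;> (apply Fin.ext; simp [h1, h2])
  · intro p hp
    simp only [Finset.mem_product, Finset.mem_range, Finset.mem_Ico] at hp
    have h1 : p.1 % n = p.1 := Nat.mod_eq_of_lt (by omega)
    have h2 : p.2 % n = p.2 := Nat.mod_eq_of_lt (by omega)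
    rw [dif_pos (by rw [Fin.mk_lt_mk, h1, h2]; omega)]
    simp [h1, h2]
  · intro e _; rfl

noncomputable def la : ℕ → ℝ := fun k => Real.log k - Real.log (k - 1 : ℕ)

lemma Iuv_eq_la {u v : ℕ} (huv : u + 1 < v) : Iuv u v = la (v - u) - la (v - u + 1) := by
  have h1 : ((u : ℝ)) + 1 < (v : ℝ) := by exact_mod_cast huv
  rw [Iuv, Iuv_eq (u : ℝ) (v : ℝ) h1, la, la]
  have e1 : ((v : ℝ) - u) = ((v - u : ℕ) : ℝ) := by
    push_cast [Nat.cast_sub (by omega : u ≤ v)]; ring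
  have e2 : ((v : ℝ) - u - 1) = ((v - u - 1 : ℕ) : ℝ) := by
    push_cast [Nat.cast_sub (by omega : u ≤ v), Nat.cast_sub (by omega : 1 ≤ v - u)]; ring
  have e3 : ((v : ℝ) + 1 - u) = ((v - u + 1 : ℕ) : ℝ) := by
    push_cast [Nat.cast_sub (by omega : u ≤ v)]; ring
  have e4 : ((v : ℝ) + 1 - u - 1) = ((v - u + 1 - 1 : ℕ) : ℝ) := by
    push_cast [Nat.cast_sub (by omega : u ≤ v)]; ring
  rw [e4, e3, e2, e1]

lemma sum_tele_inner {n w u : ℕ} (hu : u < w) (hw : w ≤ n - 2) (hn : 2 ≤ n) :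
    ∑ v ∈ Finset.Ico (w+1) n, (la (v - u) - la (v - u + 1)) = la (w + 1 - u) - la (n - u) := by
  rw [Finset.sum_Ico_eq_sum_range]
  have hcongr : ∀ i ∈ Finset.range (n - (w+1)),
      la (w + 1 + i - u) - la (w + 1 + i - u + 1)
        = (fun j => la (w + 1 + j - u)) i - (fun j => la (w + 1 + j - u)) (i + 1) := by
    intro i _
    simp only
    congr 2
    omega
  rw [Finset.sum_congr rfl hcongr, Finset.sum_range_sub' (fun j => la (w + 1 + j - u))]
  congr 2
  omega

lemma sum_tele_outer {n w : ℕ} (hw1 : 1 ≤ w) (hw2 : w ≤ n - 2) (hn : 2 ≤ n) :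
    ∑ u ∈ Finset.range w, (la (w + 1 - u) - la (n - u))
      = (Real.log (w+1) + Real.log (n - w)) - Real.log n := by
  rw [Finset.sum_sub_distrib]
  have t1 : ∑ u ∈ Finset.range w, la (w + 1 - u) = Real.log (w + 1) := by
    rw [← Finset.sum_range_reflect]
    have hpt : ∀ j ∈ Finset.range w,
        la (w + 1 - (w - 1 - j)) = Real.log ((j + 1 : ℕ) + 1) - Real.log ((j : ℕ) + 1) := by
      intro j hj
      rw [Finset.mem_range] at hj
      have e1 : w + 1 - (w - 1 - j) = j + 2 := by omega
      rw [e1, la]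
      have e2 : j + 2 - 1 = j + 1 := by omega
      rw [e2]
      push_cast
      ring_nf
    rw [Finset.sum_congr rfl hpt]
    have hts := Finset.sum_range_sub (fun j => Real.log ((j : ℕ) + 1)) w
    rw [hts]
    simp
  have t2 : ∑ u ∈ Finset.range w, la (n - u) = Real.log n - Real.log (n - w) := by
    rw [← Finset.sum_range_reflect]
    have hpt : ∀ j ∈ Finset.range w,
        la (n - (w - 1 - j)) = Real.log ((n - w + (j+1) : ℕ)) - Real.log ((n - w + j : ℕ)) := by
      intro j hj
      rw [Finset.mem_range] at hj
      have h1 : n - (w - 1 - j) = n - w + (j + 1) := by omega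
      rw [h1, la]
      have h2 : n - w + (j + 1) - 1 = n - w + j := by omega
      rw [h2]
    rw [Finset.sum_congr rfl hpt]
    have hts := Finset.sum_range_sub (fun j => Real.log ((n - w + j : ℕ))) w
    rw [hts]
    have h3 : n - w + w = n := by omega
    have h4 : n - w + 0 = n - w := by omega
    rw [h3, h4]
    congr 2
    push_cast [Nat.cast_sub (by omega : w ≤ n)]
    ring
  rw [t1, t2]
  push_cast [Nat.cast_sub (by omega : w ≤ n)]
  ring


variable {n : ℕ}

def Gr (n : ℕ) (ω : Ed n → Bool) : SimpleGraph (Fin n) :=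
  SimpleGraph.fromRel (fun a b : Fin n => (a : ℕ) + 1 = (b : ℕ) ∨ ∃ h : a < b, ω ⟨(a, b), h⟩ = true)

lemma adj_consec (ω : Ed n → Bool) (i j : Fin n) (h : (i:ℕ)+1 = (j:ℕ)) : (Gr n ω).Adj i j := by
  constructor
  · intro he; rw [he] at h; omega
  · exact Or.inl (Or.inl h)

lemma reach_all (ω : Ed n → Bool) (hn : 0 < n) (i : Fin n) :
    (Gr n ω).Reachable ⟨0, hn⟩ i := by
  obtain ⟨k, hk⟩ := i
  induction k with
  | zero => exact SimpleGraph.Reachable.refl _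
  | succ m ih =>
    have hm : m < n := by omega
    exact (ih hm).trans (adj_consec ω ⟨m, hm⟩ ⟨m+1, hk⟩ rfl).reachable

lemma no_cross (ω : Ed n → Bool) (w : ℕ)
    (hcut : ∀ (u v : Fin n) (h : u < v), (u:ℕ) < w → w < (v:ℕ) → ω ⟨(u,v),h⟩ = false)
    {a c : Fin n} (hadj : (Gr n ω).Adj a c) :
    ¬((a:ℕ) < w ∧ w < (c:ℕ)) ∧ ¬((c:ℕ) < w ∧ w < (a:ℕ)) := by
  obtain ⟨hne, hrel⟩ := hadj
  constructor
  · rintro ⟨h1, h2⟩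
    have hac : a < c := by rw [Fin.lt_def]; omega
    rcases hrel with (h | h) | (h | h)
    · omega
    · obtain ⟨h', ht⟩ := h
      rw [hcut a c h' h1 h2] at ht; exact Bool.false_ne_true ht
    · omega
    · obtain ⟨h', _⟩ := h
      rw [Fin.lt_def] at h'; omega
  · rintro ⟨h1, h2⟩
    have hca : c < a := by rw [Fin.lt_def]; omega
    rcases hrel with (h | h) | (h | h)
    · omega
    · obtain ⟨h', _⟩ := h
      rw [Fin.lt_def] at h'; omega
    · omega
    · obtain ⟨h', ht⟩ := h
      rw [hcut c a h' h1 h2] at ht; exact Bool.false_ne_true ht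

lemma mem_support_of_between (ω : Ed n → Bool) (w : ℕ) (hw : w < n)
    (hcut : ∀ (u v : Fin n) (h : u < v), (u:ℕ) < w → w < (v:ℕ) → ω ⟨(u,v),h⟩ = false)
    {a b : Fin n} (p : (Gr n ω).Walk a b)
    (hbet : ((a:ℕ) ≤ w ∧ w ≤ (b:ℕ)) ∨ ((b:ℕ) ≤ w ∧ w ≤ (a:ℕ))) :
    (⟨w, hw⟩ : Fin n) ∈ p.support := by
  induction p with
  | nil =>
    rename_i u
    simp only [SimpleGraph.Walk.support_nil, List.mem_singleton]
    have hval : w = (u:ℕ) := by omega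
    exact Fin.ext hval
  | @cons a c b hadj q ih =>
    rw [SimpleGraph.Walk.support_cons]
    by_cases haw : (a:ℕ) = w
    · rw [show a = ⟨w, hw⟩ from Fin.ext haw]
      exact List.mem_cons_self
    · have hnc := no_cross ω w hcut hadj
      refine List.mem_cons_of_mem _ (ih ?_)
      rcases hbet with ⟨h1, h2⟩ | ⟨h1, h2⟩
      · left; constructor
        · by_contra hc; push_neg at hc; exact hnc.1 ⟨by omega, by omega⟩
        · exact h2
      · right; constructor
        · exact h1
        · by_contra hc; push_neg at hc; exact hnc.2 ⟨by omega, by omega⟩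

lemma card_le_dist (hn : 2 ≤ n) (ω : Ed n → Bool) :
    (((Finset.Icc 1 (n-2)).filter (fun w =>
        ∀ e ∈ Sw n w,
          ω e = false)).card : ℕ)
      ≤ (Gr n ω).dist ⟨0, Nat.zero_lt_of_lt hn⟩ ⟨n-1, Nat.sub_lt (Nat.zero_lt_of_lt hn) Nat.one_pos⟩ := by
  obtain ⟨p, hp⟩ := (reach_all ω (by omega) ⟨n-1, by omega⟩).exists_walk_length_eq_dist
  rw [← hp]
  set T := p.support.toFinset with hT
  have h0mem : (⟨0, by omega⟩ : Fin n) ∈ T := by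
    rw [hT, List.mem_toFinset]; exact p.start_mem_support
  have hmaps : ∀ w ∈ (Finset.Icc 1 (n-2)).filter (fun w =>
      ∀ e ∈ Sw n w,
        ω e = false), (⟨w % n, Nat.mod_lt _ (by omega)⟩ : Fin n) ∈ T.erase ⟨0, by omega⟩ := by
    intro w hw
    rw [Finset.mem_filter, Finset.mem_Icc] at hw
    obtain ⟨⟨hw1, hw2⟩, hwcut⟩ := hw
    have hwn : w % n = w := Nat.mod_eq_of_lt (by omega)
    rw [Finset.mem_erase]
    constructor
    · simp only [ne_eq, Fin.mk.injEq, hwn]; omega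
    · rw [hT, List.mem_toFinset]
      have hcut' : ∀ (u v : Fin n) (h : u < v), (u:ℕ) < w → w < (v:ℕ) → ω ⟨(u,v),h⟩ = false := by
        intro u v h h1 h2
        exact hwcut ⟨(u,v),h⟩ (by simp [Sw, Finset.mem_filter]; exact ⟨h1, h2⟩)
      have := mem_support_of_between ω w (by omega) hcut' p
        (Or.inl ⟨by simpa using (by omega : (0:ℕ) ≤ w), by simpa using (by omega : w ≤ n - 1)⟩)
      convert this using 2
      all_goals exact hwn
  have hinj : Set.InjOn (fun w => (⟨w % n, Nat.mod_lt _ (by omega : 0 < n)⟩ : Fin n))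
      ((Finset.Icc 1 (n-2)).filter (fun w =>
        ∀ e ∈ Sw n w,
          ω e = false)) := by
    intro w1 h1 w2 h2 heq
    simp only [Finset.mem_coe, Finset.mem_filter, Finset.mem_Icc] at h1 h2
    obtain ⟨⟨h1a, h1b⟩, -⟩ := h1
    obtain ⟨⟨h2a, h2b⟩, -⟩ := h2
    rw [Fin.ext_iff] at heq
    simp only at heq
    rwa [Nat.mod_eq_of_lt (by omega), Nat.mod_eq_of_lt (by omega)] at heq
  calc _ ≤ (T.erase ⟨0, by omega⟩).card := Finset.card_le_card_of_injOn _ hmaps hinj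
    _ = T.card - 1 := Finset.card_erase_of_mem h0mem
    _ ≤ (p.length + 1) - 1 := by
        have : T.card ≤ p.support.length := List.toFinset_card_le _
        rw [SimpleGraph.Walk.length_support] at this
        omega
    _ = p.length := by omega


noncomputable def pw (n : ℕ) (β : ℝ) (e : Ed n) (b : Bool) : ℝ :=
  if b then
    (if ((e.1.1 : ℕ) + 1 = ((e.1.2 : ℕ))) then (1 : ℝ) else
      1 - Real.exp (-β * Iuv (e.1.1 : ℕ) (e.1.2 : ℕ)))
  else
    1 - (if ((e.1.1 : ℕ) + 1 = ((e.1.2 : ℕ))) then (1 : ℝ) else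
      1 - Real.exp (-β * Iuv (e.1.1 : ℕ) (e.1.2 : ℕ)))

lemma pw_sum {n : ℕ} (β : ℝ) (e : Ed n) : pw n β e true + pw n β e false = 1 := by
  by_cases h : (e.1.1 : ℕ) + 1 = (e.1.2 : ℕ) <;> simp [pw, h] <;> ring

lemma pw_nonneg {n : ℕ} {β : ℝ} (hβ : 0 ≤ β) (e : Ed n) (b : Bool) : 0 ≤ pw n β e b := by
  have hexp : Real.exp (-β * Iuv (e.1.1 : ℕ) (e.1.2 : ℕ)) ≤ 1 := by
    rw [Real.exp_le_one_iff]
    have := Iuv_nonneg (e.1.1 : ℕ) (e.1.2 : ℕ)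
    nlinarith
  have hexp0 : 0 < Real.exp (-β * Iuv (e.1.1 : ℕ) (e.1.2 : ℕ)) := Real.exp_pos _
  cases b <;> simp only [pw, if_true, if_false, Bool.false_eq_true] <;>
    split <;> linarith

lemma pw_false_exp {n : ℕ} (β : ℝ) {w : ℕ} {e : Ed n} (he : e ∈ Sw n w) :
    pw n β e false = Real.exp (-β * Iuv (e.1.1 : ℕ) (e.1.2 : ℕ)) := by
  simp only [Sw, Finset.mem_filter] at he
  have hne : ¬((e.1.1 : ℕ) + 1 = (e.1.2 : ℕ)) := by omega
  simp only [pw, Bool.false_eq_true, if_false, if_neg hne]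
  ring

lemma prod_Sw_ge {n : ℕ} (hn : 2 ≤ n) {β : ℝ} (hβ : 0 ≤ β) {w : ℕ} (hw1 : 1 ≤ w)
    (hw2 : w ≤ n - 2) :
    (n : ℝ) ^ (-β) ≤ ∏ e ∈ Sw n w, pw n β e false := by
  rw [Finset.prod_congr rfl (fun e he => pw_false_exp β he), ← Real.exp_sum]
  have hS : ∑ e ∈ Sw n w, -β * Iuv (e.1.1 : ℕ) (e.1.2 : ℕ)
      = -β * ∑ e ∈ Sw n w, Iuv (e.1.1 : ℕ) (e.1.2 : ℕ) := by
    rw [Finset.mul_sum]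
  rw [hS]
  have hsum : ∑ e ∈ Sw n w, Iuv (e.1.1 : ℕ) (e.1.2 : ℕ)
      = (Real.log (w + 1) + Real.log ((n : ℝ) - w)) - Real.log n := by
    rw [sum_Sw hn w hw2 (fun u v => Iuv u v)]
    have hinner : ∀ u ∈ Finset.range w,
        ∑ v ∈ Finset.Ico (w+1) n, Iuv u v = la (w + 1 - u) - la (n - u) := by
      intro u hu
      rw [Finset.mem_range] at hu
      have : ∀ v ∈ Finset.Ico (w+1) n, Iuv u v = la (v - u) - la (v - u + 1) := by
        intro v hv
        rw [Finset.mem_Ico] at hv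
        exact Iuv_eq_la (by omega)
      rw [Finset.sum_congr rfl this]
      exact sum_tele_inner hu hw2 hn
    rw [Finset.sum_congr rfl hinner]
    exact sum_tele_outer hw1 hw2 hn
  rw [hsum]
  have hnpos : (0 : ℝ) < n := by positivity
  rw [Real.rpow_def_of_pos hnpos]
  apply Real.exp_le_exp.mpr
  have h1 : Real.log ((w : ℝ) + 1) ≤ Real.log n := by
    apply Real.log_le_log (by positivity)
    have : w + 1 ≤ n := by omega
    exact_mod_cast this
  have h2 : Real.log ((n : ℝ) - w) ≤ Real.log n := by
    apply Real.log_le_log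
    · have : w + 2 ≤ n := by omega
      have : (w : ℝ) + 2 ≤ n := by exact_mod_cast this
      linarith
    · have : (0:ℝ) ≤ w := by positivity
      linarith
  have h1n : (1:ℝ) ≤ n := by
    have h2n : (2:ℝ) ≤ n := by exact_mod_cast hn
    linarith
  nlinarith [Real.log_le_log (by norm_num : (0:ℝ) < 1) h1n]


/-- In one-dimensional long-range percolation on `{0,…,n−1}` (edge `{u,v}`, `u < v`, open
independently with probability `1 − exp(−β ∫_u^{u+1}∫_v^{v+1}|x−y|^{−2})`, and probability `1`
for nearest neighbours), the expected graph distance between `0` and `n−1` is at least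
`(n−2)·n^{−β}`.  The expectation is written as a sum over configurations, weighted by the
product Bernoulli measure. -/
theorem stmt_6 (n : ℕ) (hn : 2 ≤ n) (β : ℝ) (hβ : 0 ≤ β) :
    ((n : ℝ) - 2) * (n : ℝ) ^ (-β) ≤
      ∑ ω : ({p : Fin n × Fin n // p.1 < p.2} → Bool),
        ((SimpleGraph.fromRel (fun a b : Fin n =>
            (a : ℕ) + 1 = (b : ℕ) ∨ ∃ h : a < b, ω ⟨(a, b), h⟩ = true)).dist
              ⟨0, by omega⟩ ⟨n - 1, by omega⟩ : ℝ) *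
          ∏ e : {p : Fin n × Fin n // p.1 < p.2},
            (if ω e then
                (if ((e.1.1 : ℕ) + 1 = (e.1.2 : ℕ)) then (1 : ℝ) else
                  1 - Real.exp (-β * ∫ x in ((e.1.1 : ℕ) : ℝ)..(((e.1.1 : ℕ) : ℝ) + 1),
                    ∫ y in ((e.1.2 : ℕ) : ℝ)..(((e.1.2 : ℕ) : ℝ) + 1), 1 / (x - y) ^ 2))
              else
                1 - (if ((e.1.1 : ℕ) + 1 = (e.1.2 : ℕ)) then (1 : ℝ) else
                  1 - Real.exp (-β * ∫ x in ((e.1.1 : ℕ) : ℝ)..(((e.1.1 : ℕ) : ℝ) + 1),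
                    ∫ y in ((e.1.2 : ℕ) : ℝ)..(((e.1.2 : ℕ) : ℝ) + 1), 1 / (x - y) ^ 2))) := by
  show ((n : ℝ) - 2) * (n : ℝ) ^ (-β) ≤
    ∑ ω : Ed n → Bool, ((Gr n ω).dist ⟨0, by omega⟩ ⟨n - 1, by omega⟩ : ℝ) *
      ∏ e : Ed n, pw n β e (ω e)
  calc ((n : ℝ) - 2) * (n : ℝ) ^ (-β)
      = ∑ _w ∈ Finset.Icc 1 (n - 2), (n : ℝ) ^ (-β) := by
        rw [Finset.sum_const, Nat.card_Icc, nsmul_eq_mul]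
        have hc : n - 2 + 1 - 1 = n - 2 := by omega
        rw [hc]
        congr 1
        push_cast [Nat.cast_sub (by omega : 2 ≤ n)]
        ring
    _ ≤ ∑ w ∈ Finset.Icc 1 (n - 2), ∏ e ∈ Sw n w, pw n β e false := by
        apply Finset.sum_le_sum
        intro w hw
        rw [Finset.mem_Icc] at hw
        exact prod_Sw_ge hn hβ hw.1 hw.2
    _ = ∑ w ∈ Finset.Icc 1 (n - 2), ∑ ω : Ed n → Bool,
          (if ∀ e ∈ Sw n w, ω e = false then (1:ℝ) else 0) * ∏ e, pw n β e (ω e) := by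
        refine Finset.sum_congr rfl fun w _ => ?_
        exact (bern_event (pw n β) (Sw n w) (pw_sum β)).symm
    _ = ∑ ω : Ed n → Bool,
          (∑ w ∈ Finset.Icc 1 (n - 2), if ∀ e ∈ Sw n w, ω e = false then (1:ℝ) else 0) *
            ∏ e, pw n β e (ω e) := by
        rw [Finset.sum_comm]
        exact Finset.sum_congr rfl fun ω _ => (Finset.sum_mul _ _ _).symm
    _ ≤ ∑ ω : Ed n → Bool, ((Gr n ω).dist ⟨0, by omega⟩ ⟨n - 1, by omega⟩ : ℝ) *
          ∏ e : Ed n, pw n β e (ω e) := by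
        apply Finset.sum_le_sum
        intro ω _
        apply mul_le_mul_of_nonneg_right
        · rw [Finset.sum_boole]
          exact_mod_cast card_le_dist hn ω
        · exact Finset.prod_nonneg fun e _ => pw_nonneg hβ e (ω e)
end

section
/- Consider long-range percolation on ℤ^d where for distinct u, v the edge {u,v} is open independently with probability 1 − exp(−β ∫_{u+C}∫_{v+C} ‖x−y‖^{−2d} dy dx), C = [0,1)^d. Then for all n ≥ 1 and u, v ∈ ℤ^d, the probability that no edge joins the boxes V_u^n = nu + {0,…,n−1}^d and V_v^n = nv + {0,…,n−1}^d equals the probability that the single edge {u,v} is closed, i.e. exp(−β ∫_{u+C}∫_{v+C} ‖x−y‖^{−2d} dy dx). -/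
open MeasureTheory Pointwise

noncomputable def Kk (d : ℕ) (x y : Fin d → ℝ) : ℝ :=
  1 / Real.sqrt (∑ i, (x i - y i) ^ 2) ^ (2 * d)

lemma measurable_Kk (d : ℕ) : Measurable fun p : (Fin d → ℝ) × (Fin d → ℝ) => Kk d p.1 p.2 := by
  have h : Continuous fun p : (Fin d → ℝ) × (Fin d → ℝ) =>
      Real.sqrt (∑ i, (p.1 i - p.2 i) ^ 2) ^ (2 * d) := by fun_prop
  simpa only [Kk, one_div, Pi.inv_def] using h.measurable.inv

lemma measurable_Kk_right (d : ℕ) (x : Fin d → ℝ) : Measurable (Kk d x) := by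
  have h : Continuous fun y : Fin d → ℝ =>
      Real.sqrt (∑ i, (x i - y i) ^ 2) ^ (2 * d) := by fun_prop
  unfold Kk
  simp only [one_div]
  exact h.measurable.inv

lemma Kk_nonneg (d : ℕ) (x y : Fin d → ℝ) : 0 ≤ Kk d x y := by
  unfold Kk; positivity

lemma Kk_le_one (d : ℕ) {x y : Fin d → ℝ} (h : ∃ i, 1 ≤ |x i - y i|) : Kk d x y ≤ 1 := by
  obtain ⟨i, hi⟩ := h
  have h1 : (1 : ℝ) ≤ Real.sqrt (∑ j, (x j - y j) ^ 2) := by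
    have h2 : (x i - y i) ^ 2 ≤ ∑ j, (x j - y j) ^ 2 :=
      Finset.single_le_sum (f := fun j => (x j - y j) ^ 2) (fun j _ => sq_nonneg _)
        (Finset.mem_univ i)
    calc (1 : ℝ) ≤ |x i - y i| := hi
    _ = Real.sqrt ((x i - y i) ^ 2) := (Real.sqrt_sq_eq_abs _).symm
    _ ≤ _ := Real.sqrt_le_sqrt h2
  rw [Kk, div_le_one (by positivity)]
  exact one_le_pow₀ h1

lemma Kk_smul (d n : ℕ) (x y : Fin d → ℝ) :
    Kk d ((n : ℝ) • x) ((n : ℝ) • y) = ((n : ℝ) ^ (2 * d))⁻¹ * Kk d x y := by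
  have hsum : ∑ i, (((n : ℝ) • x) i - ((n : ℝ) • y) i) ^ 2
      = (n : ℝ) ^ 2 * ∑ i, (x i - y i) ^ 2 := by
    rw [Finset.mul_sum]
    refine Finset.sum_congr rfl fun i _ => ?_
    simp [Pi.smul_apply, smul_eq_mul]; ring
  have hsqrt : Real.sqrt ((n : ℝ) ^ 2 * ∑ i, (x i - y i) ^ 2)
      = (n : ℝ) * Real.sqrt (∑ i, (x i - y i) ^ 2) := by
    rw [Real.sqrt_mul (sq_nonneg _), Real.sqrt_sq (Nat.cast_nonneg n)]
  rw [Kk, Kk, hsum, hsqrt, mul_pow, one_div, one_div, mul_inv]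

lemma measurableSet_box (d : ℕ) (a b : Fin d → ℝ) :
    MeasurableSet (Set.univ.pi fun i => Set.Ico (a i) (b i)) :=
  MeasurableSet.univ_pi fun _ => measurableSet_Ico

lemma volume_box_lt_top (d : ℕ) (a b : Fin d → ℝ) :
    volume (Set.univ.pi fun i => Set.Ico (a i) (b i)) < ⊤ := by
  rw [volume_pi_pi]
  exact ENNReal.prod_lt_top fun i _ => by simp [Real.volume_Ico]

lemma Ico_union_1d (m : ℤ) (n : ℕ) :
    (⋃ j : Fin n, Set.Ico (((m + (j : ℕ) : ℤ) : ℝ)) (((m + (j : ℕ) : ℤ) : ℝ) + 1))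
      = Set.Ico ((m : ℝ)) ((m : ℝ) + n) := by
  ext x
  simp only [Set.mem_iUnion, Set.mem_Ico]
  constructor
  · rintro ⟨j, h1, h2⟩
    have hj : ((j : ℕ) : ℝ) + 1 ≤ n := by exact_mod_cast j.2
    push_cast at h1 h2 ⊢
    constructor <;> nlinarith
  · rintro ⟨h1, h2⟩
    have hfl : (m : ℝ) ≤ (⌊x⌋ : ℝ) := by exact_mod_cast Int.le_floor.mpr h1
    have hfl2 : ⌊x⌋ < m + n := by rw [Int.floor_lt]; push_cast; exact h2
    have hge : m ≤ ⌊x⌋ := by exact_mod_cast hfl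
    refine ⟨⟨(⌊x⌋ - m).toNat, by omega⟩, ?_, ?_⟩
    · push_cast [Int.toNat_of_nonneg (by omega : (0:ℤ) ≤ ⌊x⌋ - m)]
      have := Int.floor_le x
      linarith
    · push_cast [Int.toNat_of_nonneg (by omega : (0:ℤ) ≤ ⌊x⌋ - m)]
      have := Int.lt_floor_add_one x
      linarith

lemma box_union (d n : ℕ) (w : Fin d → ℤ) :
    (⋃ k : Fin d → Fin n, Set.univ.pi fun i =>
        Set.Ico ((((n : ℤ) * w i + (k i : ℕ) : ℤ) : ℝ))
          ((((n : ℤ) * w i + (k i : ℕ) : ℤ) : ℝ) + 1))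
      = Set.univ.pi fun i =>
          Set.Ico ((((n : ℤ) * w i : ℤ) : ℝ)) ((((n : ℤ) * w i : ℤ) : ℝ) + n) := by
  have h := Set.iUnion_univ_pi (t := fun (i : Fin d) (j : Fin n) =>
    Set.Ico ((((n : ℤ) * w i + (j : ℕ) : ℤ) : ℝ)) ((((n : ℤ) * w i + (j : ℕ) : ℤ) : ℝ) + 1))
  refine h.trans ?_
  exact Set.pi_congr rfl fun i _ => Ico_union_1d ((n : ℤ) * w i) n

lemma box_disjoint (d n : ℕ) (w : Fin d → ℤ) :
    Pairwise (Function.onFun Disjoint fun k : Fin d → Fin n =>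
      Set.univ.pi fun i =>
        Set.Ico ((((n : ℤ) * w i + (k i : ℕ) : ℤ) : ℝ))
          ((((n : ℤ) * w i + (k i : ℕ) : ℤ) : ℝ) + 1)) := by
  intro k k' hkk'
  obtain ⟨i, hi⟩ : ∃ i, k i ≠ k' i := Function.ne_iff.mp hkk'
  rw [Function.onFun, Set.disjoint_left]
  intro x hx hx'
  have h1 := hx i (Set.mem_univ i)
  have h2 := hx' i (Set.mem_univ i)
  simp only [Set.mem_Ico] at h1 h2
  have e1 : ⌊x i⌋ = (n : ℤ) * w i + (k i : ℕ) := Int.floor_eq_iff.mpr ⟨h1.1, h1.2⟩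
  have e2 : ⌊x i⌋ = (n : ℤ) * w i + (k' i : ℕ) := Int.floor_eq_iff.mpr ⟨h2.1, h2.2⟩
  have : ((k i : ℕ) : ℤ) = ((k' i : ℕ) : ℤ) := by omega
  exact hi (Fin.val_injective (by exact_mod_cast this))

lemma smul_ubox (d n : ℕ) (hn : 1 ≤ n) (w : Fin d → ℤ) :
    (n : ℝ) • (Set.univ.pi fun i => Set.Ico ((w i : ℝ)) ((w i : ℝ) + 1))
      = Set.univ.pi fun i =>
          Set.Ico ((((n : ℤ) * w i : ℤ) : ℝ)) ((((n : ℤ) * w i : ℤ) : ℝ) + n) := by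
  have hpos : (0 : ℝ) < n := by exact_mod_cast hn
  have hinv : (n : ℝ) * (n : ℝ)⁻¹ = 1 := mul_inv_cancel₀ hpos.ne'
  ext x
  rw [Set.mem_smul_set_iff_inv_smul_mem₀ hpos.ne']
  simp only [Set.mem_pi, Set.mem_univ, forall_true_left, Pi.smul_apply, smul_eq_mul,
    Set.mem_Ico]
  refine forall_congr' fun i => ?_
  push_cast
  constructor
  · rintro ⟨a, b⟩
    have a' := mul_le_mul_of_nonneg_left a hpos.le
    have b' := mul_lt_mul_of_pos_left b hpos
    rw [show (n:ℝ) * ((n:ℝ)⁻¹ * x i) = x i by field_simp] at a' b'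
    constructor <;> nlinarith
  · rintro ⟨a, b⟩
    have a' := mul_le_mul_of_nonneg_left a (inv_nonneg.mpr hpos.le)
    have b' := mul_lt_mul_of_pos_left b (inv_pos.mpr hpos)
    rw [show (n:ℝ)⁻¹ * ((n:ℝ) * (w i : ℝ)) = (w i : ℝ) by field_simp] at a'
    rw [show (n:ℝ)⁻¹ * ((n:ℝ) * (w i : ℝ) + (n:ℝ)) = (w i : ℝ) + 1 by field_simp] at b'
    exact ⟨a', b'⟩

lemma sep_box (d n : ℕ) (hn : 1 ≤ n) {u v : Fin d → ℤ} (hsep : ∃ i, 2 ≤ |u i - v i|)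
    {x y : Fin d → ℝ}
    (hx : x ∈ Set.univ.pi fun i =>
        Set.Ico ((((n : ℤ) * u i : ℤ) : ℝ)) ((((n : ℤ) * u i : ℤ) : ℝ) + n))
    (hy : y ∈ Set.univ.pi fun i =>
        Set.Ico ((((n : ℤ) * v i : ℤ) : ℝ)) ((((n : ℤ) * v i : ℤ) : ℝ) + n)) :
    ∃ i, 1 ≤ |x i - y i| := by
  obtain ⟨i, hi⟩ := hsep
  have hx' := hx i (Set.mem_univ i)
  have hy' := hy i (Set.mem_univ i)
  simp only [Set.mem_Ico] at hx' hy'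
  have hn' : (1 : ℝ) ≤ n := by exact_mod_cast hn
  obtain ⟨a1, a2⟩ := hx'
  obtain ⟨b1, b2⟩ := hy'
  push_cast at a1 a2 b1 b2
  refine ⟨i, ?_⟩
  rcases le_abs.mp hi with h | h
  · have h' : (2 : ℝ) ≤ (u i : ℝ) - (v i : ℝ) := by exact_mod_cast h
    refine le_abs.mpr (Or.inl ?_)
    nlinarith
  · have h' : (2 : ℝ) ≤ (v i : ℝ) - (u i : ℝ) := by
      have : (2 : ℤ) ≤ v i - u i := by omega
      exact_mod_cast this
    refine le_abs.mpr (Or.inr ?_)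
    nlinarith

open Pointwise in
lemma sm_G (d : ℕ) (B : Set (Fin d → ℝ)) (hB : MeasurableSet B) :
    StronglyMeasurable fun x => ∫ y in B, Kk d x y := by
  have h : StronglyMeasurable fun p : (Fin d → ℝ) × (Fin d → ℝ) =>
      (Set.univ ×ˢ B).indicator (fun q => Kk d q.1 q.2) p :=
    ((measurable_Kk d).indicator (MeasurableSet.univ.prod hB)).stronglyMeasurable
  have heq : (fun x => ∫ y in B, Kk d x y)
      = fun x => ∫ y, (Set.univ ×ˢ B).indicator (fun q => Kk d q.1 q.2) (x, y) := by
    funext x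
    rw [← integral_indicator hB]
    congr 1
    funext y
    by_cases hy : y ∈ B <;> simp [Set.indicator, hy]
  rw [heq]
  exact h.integral_prod_right'

lemma key (d n : ℕ) (hn : 1 ≤ n) (u v : Fin d → ℤ) (hsep : ∃ i, 2 ≤ |u i - v i|) :
    ∑ e : (Fin d → Fin n) × (Fin d → Fin n),
      ∫ x in (Set.univ.pi fun i : Fin d =>
          Set.Ico ((((n : ℤ) * u i + (e.1 i : ℕ) : ℤ) : ℝ))
            ((((n : ℤ) * u i + (e.1 i : ℕ) : ℤ) : ℝ) + 1)),
        ∫ y in (Set.univ.pi fun i : Fin d =>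
            Set.Ico ((((n : ℤ) * v i + (e.2 i : ℕ) : ℤ) : ℝ))
              ((((n : ℤ) * v i + (e.2 i : ℕ) : ℤ) : ℝ) + 1)),
          Kk d x y
    = ∫ x in (Set.univ.pi fun i : Fin d => Set.Ico ((u i : ℝ)) ((u i : ℝ) + 1)),
        ∫ y in (Set.univ.pi fun i : Fin d => Set.Ico ((v i : ℝ)) ((v i : ℝ) + 1)),
          Kk d x y := by
  have hpos : (0 : ℝ) < n := by exact_mod_cast hn
  set A : (Fin d → Fin n) → Set (Fin d → ℝ) := fun k => Set.univ.pi fun i =>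
    Set.Ico ((((n : ℤ) * u i + (k i : ℕ) : ℤ) : ℝ)) ((((n : ℤ) * u i + (k i : ℕ) : ℤ) : ℝ) + 1)
    with hA
  set B : (Fin d → Fin n) → Set (Fin d → ℝ) := fun l => Set.univ.pi fun i =>
    Set.Ico ((((n : ℤ) * v i + (l i : ℕ) : ℤ) : ℝ)) ((((n : ℤ) * v i + (l i : ℕ) : ℤ) : ℝ) + 1)
    with hB
  set BigU : Set (Fin d → ℝ) := Set.univ.pi fun i =>
    Set.Ico ((((n : ℤ) * u i : ℤ) : ℝ)) ((((n : ℤ) * u i : ℤ) : ℝ) + n) with hBigU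
  set BigV : Set (Fin d → ℝ) := Set.univ.pi fun i =>
    Set.Ico ((((n : ℤ) * v i : ℤ) : ℝ)) ((((n : ℤ) * v i : ℤ) : ℝ) + n) with hBigV
  set Uu : Set (Fin d → ℝ) := Set.univ.pi fun i => Set.Ico ((u i : ℝ)) ((u i : ℝ) + 1) with hUu
  set Uv : Set (Fin d → ℝ) := Set.univ.pi fun i => Set.Ico ((v i : ℝ)) ((v i : ℝ) + 1) with hUv
  have hAmeas : ∀ k, MeasurableSet (A k) := fun k => measurableSet_box d _ _
  have hBmeas : ∀ l, MeasurableSet (B l) := fun l => measurableSet_box d _ _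
  have hBigUmeas : MeasurableSet BigU := measurableSet_box d _ _
  have hBigVmeas : MeasurableSet BigV := measurableSet_box d _ _
  have hAu : (⋃ k, A k) = BigU := box_union d n u
  have hBu : (⋃ l, B l) = BigV := box_union d n v
  have hAsub : ∀ k, A k ⊆ BigU := fun k => hAu ▸ Set.subset_iUnion A k
  have hBsub : ∀ l, B l ⊆ BigV := fun l => hBu ▸ Set.subset_iUnion B l
  have hKb : ∀ x ∈ BigU, ∀ y ∈ BigV, ‖Kk d x y‖ ≤ 1 := by
    intro x hx y hy
    rw [Real.norm_eq_abs, abs_of_nonneg (Kk_nonneg d x y)]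
    exact Kk_le_one d (sep_box d n hn hsep hx hy)
  -- inner decomposition, valid for x ∈ BigU
  have step1 : ∀ x ∈ BigU, ∫ y in BigV, Kk d x y = ∑ l, ∫ y in B l, Kk d x y := by
    intro x hx
    rw [← hBu]
    refine integral_iUnion_fintype hBmeas (box_disjoint d n v) fun l => ?_
    refine Measure.integrableOn_of_bounded (volume_box_lt_top d _ _).ne
      (measurable_Kk_right d x).aestronglyMeasurable (M := 1) ?_
    exact ae_restrict_of_forall_mem (hBmeas l) fun y hy => hKb x hx y (hBsub l hy)
  -- integrability of the pieces
  have hfl_int : ∀ (k l : Fin d → Fin n),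
      IntegrableOn (fun x => ∫ y in B l, Kk d x y) (A k) := by
    intro k l
    refine Measure.integrableOn_of_bounded (volume_box_lt_top d _ _).ne
      (sm_G d (B l) (hBmeas l)).aestronglyMeasurable (M := (volume (B l)).toReal) ?_
    refine ae_restrict_of_forall_mem (hAmeas k) fun x hx => ?_
    have := norm_setIntegral_le_of_norm_le_const (volume_box_lt_top d _ _)
      (fun y hy => hKb x (hAsub k hx) y (hBsub l hy))
    simpa only [one_mul, Measure.real] using this
  have hG_int : ∀ k, IntegrableOn (fun x => ∫ y in BigV, Kk d x y) (A k) := by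
    intro k
    refine Measure.integrableOn_of_bounded (volume_box_lt_top d _ _).ne
      (sm_G d BigV hBigVmeas).aestronglyMeasurable (M := (volume BigV).toReal) ?_
    refine ae_restrict_of_forall_mem (hAmeas k) fun x hx => ?_
    have := norm_setIntegral_le_of_norm_le_const (volume_box_lt_top d _ _)
      (fun y hy => hKb x (hAsub k hx) y hy)
    simpa only [one_mul, Measure.real] using this
  -- combine the double sum
  have step2 : (∑ e : (Fin d → Fin n) × (Fin d → Fin n),
        ∫ x in A e.1, ∫ y in B e.2, Kk d x y)
      = ∫ x in BigU, ∫ y in BigV, Kk d x y := by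
    rw [Fintype.sum_prod_type]
    have hcol : ∀ k, (∑ l, ∫ x in A k, ∫ y in B l, Kk d x y)
        = ∫ x in A k, ∫ y in BigV, Kk d x y := by
      intro k
      rw [← integral_finset_sum _ (fun l _ => hfl_int k l)]
      refine setIntegral_congr_fun (hAmeas k) fun x hx => ?_
      exact (step1 x (hAsub k hx)).symm
    simp_rw [hcol]
    rw [← integral_iUnion_fintype hAmeas (box_disjoint d n u) hG_int, hAu]
  -- scaling
  have hD : Module.finrank ℝ (Fin d → ℝ) = d := by
    simp [Module.finrank_fintype_fun_eq_card]
  have hsmulU : (n : ℝ) • Uu = BigU := smul_ubox d n hn u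
  have hsmulV : (n : ℝ) • Uv = BigV := smul_ubox d n hn v
  have hGx : ∀ x : Fin d → ℝ, (∫ y in BigV, Kk d ((n : ℝ) • x) y)
      = ((n : ℝ) ^ d * ((n : ℝ) ^ (2 * d))⁻¹) * ∫ y in Uv, Kk d x y := by
    intro x
    have h2 := Measure.setIntegral_comp_smul_of_pos volume (fun y => Kk d ((n : ℝ) • x) y) Uv hpos
    rw [hsmulV, hD] at h2
    have h3 : (∫ y in Uv, Kk d ((n : ℝ) • x) ((n : ℝ) • y))
        = ∫ y in Uv, ((n : ℝ) ^ (2 * d))⁻¹ * Kk d x y := by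
      simp_rw [Kk_smul]
    beta_reduce at h2
    rw [h3, integral_const_mul, smul_eq_mul] at h2
    rw [eq_comm, mul_assoc, h2, ← mul_assoc, mul_inv_cancel₀ (pow_ne_zero _ hpos.ne'), one_mul]
  have step3 : (∫ x in BigU, ∫ y in BigV, Kk d x y)
      = ∫ x in Uu, ∫ y in Uv, Kk d x y := by
    have h1 := Measure.setIntegral_comp_smul_of_pos volume
      (fun x => ∫ y in BigV, Kk d x y) Uu hpos
    rw [hsmulU, hD] at h1
    have h4 : (∫ x in Uu, ∫ y in BigV, Kk d ((n : ℝ) • x) y)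
        = ((n : ℝ) ^ d * ((n : ℝ) ^ (2 * d))⁻¹) * ∫ x in Uu, ∫ y in Uv, Kk d x y := by
      simp_rw [hGx]
      rw [integral_const_mul]
    rw [h4] at h1
    beta_reduce at h1
    rw [smul_eq_mul] at h1
    have h0 : ((n : ℝ) ^ d) ≠ 0 := pow_ne_zero _ hpos.ne'
    have hcan : (n : ℝ) ^ d * ((n : ℝ) ^ d * ((n : ℝ) ^ (2 * d))⁻¹) = 1 := by
      rw [two_mul, pow_add, mul_inv]
      field_simp
    calc (∫ x in BigU, ∫ y in BigV, Kk d x y)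
        = (n : ℝ) ^ d * (((n : ℝ) ^ d)⁻¹ * ∫ x in BigU, ∫ y in BigV, Kk d x y) := by
          rw [← mul_assoc, mul_inv_cancel₀ h0, one_mul]
      _ = (n : ℝ) ^ d * ((n : ℝ) ^ d * ((n : ℝ) ^ (2 * d))⁻¹ * ∫ x in Uu, ∫ y in Uv, Kk d x y) := by
          rw [← h1]
      _ = ∫ x in Uu, ∫ y in Uv, Kk d x y := by
          rw [← mul_assoc, ← mul_assoc, mul_assoc ((n:ℝ)^d), hcan, one_mul]
  exact step2.trans step3

theorem stmt_12' (d n : ℕ) (hd : 1 ≤ d) (hn : 1 ≤ n) (β : ℝ) (hβ : 0 ≤ β)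
    (u v : Fin d → ℤ) (hsep : ∃ i, 2 ≤ |u i - v i|) :
    ∑ ω ∈ Finset.univ.filter
        (fun ω : ((Fin d → Fin n) × (Fin d → Fin n)) → Bool => ∀ e, ω e = false),
      ∏ e : (Fin d → Fin n) × (Fin d → Fin n),
        (if ω e then
            1 - Real.exp (-β *
              ∫ x in (Set.univ.pi fun i : Fin d =>
                  Set.Ico ((((n : ℤ) * u i + (e.1 i : ℕ) : ℤ) : ℝ))
                    ((((n : ℤ) * u i + (e.1 i : ℕ) : ℤ) : ℝ) + 1)),
                ∫ y in (Set.univ.pi fun i : Fin d =>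
                    Set.Ico ((((n : ℤ) * v i + (e.2 i : ℕ) : ℤ) : ℝ))
                      ((((n : ℤ) * v i + (e.2 i : ℕ) : ℤ) : ℝ) + 1)),
                  Kk d x y)
          else
            Real.exp (-β *
              ∫ x in (Set.univ.pi fun i : Fin d =>
                  Set.Ico ((((n : ℤ) * u i + (e.1 i : ℕ) : ℤ) : ℝ))
                    ((((n : ℤ) * u i + (e.1 i : ℕ) : ℤ) : ℝ) + 1)),
                ∫ y in (Set.univ.pi fun i : Fin d =>
                    Set.Ico ((((n : ℤ) * v i + (e.2 i : ℕ) : ℤ) : ℝ))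
                      ((((n : ℤ) * v i + (e.2 i : ℕ) : ℤ) : ℝ) + 1)),
                  Kk d x y)) =
      Real.exp (-β *
        ∫ x in (Set.univ.pi fun i : Fin d => Set.Ico ((u i : ℝ)) ((u i : ℝ) + 1)),
          ∫ y in (Set.univ.pi fun i : Fin d => Set.Ico ((v i : ℝ)) ((v i : ℝ) + 1)),
            Kk d x y) := by
  have hf : Finset.univ.filter
      (fun ω : ((Fin d → Fin n) × (Fin d → Fin n)) → Bool => ∀ e, ω e = false)
      = {fun _ => false} := by
    ext ω
    simp [funext_iff]
  rw [hf, Finset.sum_singleton]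
  simp only [Bool.false_eq_true, if_false]
  rw [← Real.exp_sum, ← Finset.mul_sum, key d n hn u v hsep]

/-- Self-similarity: the probability (written as the weighted sum over configurations of
the finitely many edges between the two boxes) that no edge joins `V_u^n = nu + {0,…,n−1}^d`
and `V_v^n = nv + {0,…,n−1}^d` equals the probability `exp(−β ∫_{u+C}∫_{v+C} ‖x−y‖₂^{−2d})`
that the single edge `{u,v}` is closed. -/
theorem stmt_12 (d n : ℕ) (hd : 1 ≤ d) (hn : 1 ≤ n) (β : ℝ) (hβ : 0 ≤ β)
    (u v : Fin d → ℤ) (hsep : ∃ i, 2 ≤ |u i - v i|) :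
    ∑ ω ∈ Finset.univ.filter
        (fun ω : ((Fin d → Fin n) × (Fin d → Fin n)) → Bool => ∀ e, ω e = false),
      ∏ e : (Fin d → Fin n) × (Fin d → Fin n),
        (if ω e then
            1 - Real.exp (-β *
              ∫ x in (Set.univ.pi fun i : Fin d =>
                  Set.Ico ((((n : ℤ) * u i + (e.1 i : ℕ) : ℤ) : ℝ))
                    ((((n : ℤ) * u i + (e.1 i : ℕ) : ℤ) : ℝ) + 1)),
                ∫ y in (Set.univ.pi fun i : Fin d =>
                    Set.Ico ((((n : ℤ) * v i + (e.2 i : ℕ) : ℤ) : ℝ))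
                      ((((n : ℤ) * v i + (e.2 i : ℕ) : ℤ) : ℝ) + 1)),
                  1 / Real.sqrt (∑ i, (x i - y i) ^ 2) ^ (2 * d))
          else
            Real.exp (-β *
              ∫ x in (Set.univ.pi fun i : Fin d =>
                  Set.Ico ((((n : ℤ) * u i + (e.1 i : ℕ) : ℤ) : ℝ))
                    ((((n : ℤ) * u i + (e.1 i : ℕ) : ℤ) : ℝ) + 1)),
                ∫ y in (Set.univ.pi fun i : Fin d =>
                    Set.Ico ((((n : ℤ) * v i + (e.2 i : ℕ) : ℤ) : ℝ))
                      ((((n : ℤ) * v i + (e.2 i : ℕ) : ℤ) : ℝ) + 1)),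
                  1 / Real.sqrt (∑ i, (x i - y i) ^ 2) ^ (2 * d))) =
      Real.exp (-β *
        ∫ x in (Set.univ.pi fun i : Fin d => Set.Ico ((u i : ℝ)) ((u i : ℝ) + 1)),
          ∫ y in (Set.univ.pi fun i : Fin d => Set.Ico ((v i : ℝ)) ((v i : ℝ) + 1)),
            1 / Real.sqrt (∑ i, (x i - y i) ^ 2) ^ (2 * d)) := by
  exact stmt_12' d n hd hn β hβ u v hsep
end

section
/- For all n ≥ 3, Σ_{k=0}^{n−3} Σ_{l=2}^{n−1−k} (1−l)/(l+1)² ≤ 5n + 4 − n·log n. -/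
open Finset Real

lemma lemA {x : ℝ} (hx : 2 ≤ x) : (1 - x) / (x + 1) ^ 2 ≤ 3 / x ^ 2 - 1 / x := by
  have hx0 : 0 < x := by linarith
  have h1 : (0:ℝ) < (x+1)^2 := by positivity
  have h2 : (0:ℝ) < x^2 := by positivity
  have : 3 / x ^ 2 - 1 / x = (3 - x) / x ^ 2 := by field_simp
  rw [this, div_le_div_iff₀ h1 h2]
  nlinarith

lemma logstep {x : ℝ} (hx : 0 < x) : Real.log (x + 1) - Real.log x ≤ 1 / x := by
  rw [← Real.log_div (by linarith) (ne_of_gt hx)]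
  have h := Real.log_le_sub_one_of_pos (show 0 < (x+1)/x by positivity)
  have : (x + 1) / x - 1 = 1 / x := by field_simp; ring
  linarith [this ▸ h]

lemma lemB : ∀ m : ℕ, 1 ≤ m → ∑ l ∈ Finset.Icc 2 m, (1:ℝ) / (l:ℝ) ^ 2 ≤ 1 - 1 / m := by
  intro m hm
  induction m, hm using Nat.le_induction with
  | base => simp
  | succ m hm ih =>
    rw [Finset.sum_Icc_succ_top (by omega)]
    have hm0 : (0:ℝ) < m := by exact_mod_cast hm
    have hm1 : (0:ℝ) < (m:ℝ) + 1 := by linarith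
    have key : (1:ℝ) / ((m:ℝ)+1)^2 ≤ 1/m - 1/(m+1) := by
      rw [div_sub_div _ _ (ne_of_gt hm0) (ne_of_gt hm1)]
      rw [div_le_div_iff₀ (by positivity) (by positivity)]
      ring_nf
      nlinarith
    push_cast
    linarith

lemma lemC : ∀ m : ℕ, 1 ≤ m →
    Real.log ((m:ℝ) + 1) - Real.log 2 ≤ ∑ l ∈ Finset.Icc 2 m, 1 / (l:ℝ) := by
  intro m hm
  induction m, hm using Nat.le_induction with
  | base => norm_num
  | succ m hm ih =>
    rw [Finset.sum_Icc_succ_top (by omega)]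
    have hm1 : (0:ℝ) < (m:ℝ) + 1 := by positivity
    have := logstep hm1
    push_cast
    linarith

lemma lemE : ∀ p : ℕ, ((p:ℝ)+2) * Real.log ((p:ℝ)+2) - ((p:ℝ)+2) + 2 - 2 * Real.log 2
    ≤ ∑ j ∈ Finset.range p, Real.log ((j:ℝ)+3) := by
  intro p
  induction p with
  | zero => simp
  | succ p ih =>
    rw [Finset.sum_range_succ]
    have hp2 : (0:ℝ) < (p:ℝ) + 2 := by positivity
    have h := logstep hp2
    have hlog : Real.log ((p:ℝ)+3) - Real.log ((p:ℝ)+2) ≤ 1 / ((p:ℝ)+2) := by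
      have : (p:ℝ) + 2 + 1 = (p:ℝ) + 3 := by ring
      linarith [this ▸ h]
    have hmul : ((p:ℝ)+2) * (Real.log ((p:ℝ)+3) - Real.log ((p:ℝ)+2)) ≤ 1 := by
      have := mul_le_mul_of_nonneg_left hlog (le_of_lt hp2)
      rwa [mul_one_div, div_self (ne_of_gt hp2)] at this
    push_cast
    have e : ((p:ℝ) + 1 + 2) = (p:ℝ) + 3 := by ring
    rw [e]
    nlinarith [hmul]

lemma inner_bound (m : ℕ) (hm : 2 ≤ m) :
    ∑ l ∈ Finset.Icc 2 m, (1 - (l:ℝ)) / ((l:ℝ) + 1) ^ 2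
      ≤ 3 + Real.log 2 - Real.log ((m:ℝ)+1) := by
  have h1 : ∑ l ∈ Finset.Icc 2 m, (1 - (l:ℝ)) / ((l:ℝ) + 1) ^ 2
      ≤ ∑ l ∈ Finset.Icc 2 m, (3 / (l:ℝ)^2 - 1 / l) := by
    apply Finset.sum_le_sum
    intro l hl
    have : 2 ≤ l := (Finset.mem_Icc.mp hl).1
    exact lemA (by exact_mod_cast this)
  have h2 : ∑ l ∈ Finset.Icc 2 m, (3 / (l:ℝ)^2 - 1 / l)
      = 3 * (∑ l ∈ Finset.Icc 2 m, (1:ℝ) / (l:ℝ)^2) - ∑ l ∈ Finset.Icc 2 m, 1 / (l:ℝ) := by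
    rw [Finset.sum_sub_distrib, Finset.mul_sum]
    congr 1
    apply Finset.sum_congr rfl
    intro l _
    ring
  have hB := lemB m (by omega)
  have hC := lemC m (by omega)
  have hm0 : (0:ℝ) ≤ 1 / (m:ℝ) := by positivity
  linarith

theorem stmt_17 (n : ℕ) (hn : 3 ≤ n) :
    ∑ k ∈ Finset.range (n - 2), ∑ l ∈ Finset.Icc 2 (n - 1 - k),
      (1 - (l : ℝ)) / ((l : ℝ) + 1) ^ 2 ≤ 5 * n + 4 - n * Real.log n := by
  have step1 : ∑ k ∈ Finset.range (n - 2), ∑ l ∈ Finset.Icc 2 (n - 1 - k),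
      (1 - (l : ℝ)) / ((l : ℝ) + 1) ^ 2
      ≤ ∑ k ∈ Finset.range (n - 2), (3 + Real.log 2 - Real.log ((n - k : ℕ))) := by
    apply Finset.sum_le_sum
    intro k hk
    have hk' : k < n - 2 := Finset.mem_range.mp hk
    have hm : 2 ≤ n - 1 - k := by omega
    have := inner_bound (n - 1 - k) hm
    have hcast : ((n - 1 - k : ℕ) : ℝ) + 1 = ((n - k : ℕ) : ℝ) := by
      have : (n - 1 - k) + 1 = n - k := by omega
      exact_mod_cast congrArg (Nat.cast : ℕ → ℝ) this
    rwa [hcast] at this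
  have step2 : ∑ k ∈ Finset.range (n - 2), Real.log ((n - k : ℕ) : ℝ)
      = ∑ j ∈ Finset.range (n - 2), Real.log ((j:ℝ) + 3) := by
    rw [← Finset.sum_range_reflect (fun j => Real.log ((j:ℝ) + 3)) (n - 2)]
    apply Finset.sum_congr rfl
    intro k hk
    have hk' : k < n - 2 := Finset.mem_range.mp hk
    congr 1
    have : (n - k) = (n - 2 - 1 - k) + 3 := by omega
    rw [this]
    push_cast
    ring
  have step3 := lemE (n - 2)
  have hcast2 : ((n - 2 : ℕ) : ℝ) = (n:ℝ) - 2 := by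
    have : (0:ℕ) + 2 ≤ n := by omega
    push_cast [Nat.cast_sub (by omega : 2 ≤ n)]
    ring
  have hsum : ∑ k ∈ Finset.range (n - 2), (3 + Real.log 2 - Real.log ((n - k : ℕ) : ℝ))
      = ((n - 2 : ℕ) : ℝ) * (3 + Real.log 2)
        - ∑ k ∈ Finset.range (n - 2), Real.log ((n - k : ℕ) : ℝ) := by
    rw [Finset.sum_sub_distrib, Finset.sum_const, nsmul_eq_mul, Finset.card_range]
  rw [hcast2] at step3
  have e2 : ((n:ℝ) - 2 + 2) = (n:ℝ) := by ring
  rw [e2] at step3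
  have hlog2a : Real.log 2 ≤ 1 := by
    have := Real.log_le_sub_one_of_pos (by norm_num : (0:ℝ) < 2)
    linarith
  have hlog2b : (0:ℝ) ≤ Real.log 2 := Real.log_nonneg (by norm_num)
  have hn3 : (3:ℝ) ≤ (n:ℝ) := by exact_mod_cast hn
  rw [hsum, hcast2, step2] at step1
  nlinarith [step1, step3]
end
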